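/- arXiv:0811.1234 — 6 statements merged into one kernel-verified Lean document; each statement's English description precedes it below -/
import Mathlib

section
/- Let ψ : ℕ → ℝ be a nonnegative function and let m ≠ n be positive integers. If λ(E_m ∩ E_n) > 0, then gcd(m,n) ≤ ψ(m)·n + ψ(n)·m. -/
open MeasureTheory Filter

/-- `E_n ⊆ ℝ/ℤ`: the union over `1 ≤ a ≤ n` with `gcd(a,n)=1` of the open intervals
`((a−ψ(n))/n, (a+ψ(n))/n)` taken modulo 1. -/
def ECirc (ψ : ℕ → ℝ) (n : ℕ) : Set UnitAddCircle :=
  ⋃ a ∈ Finset.filter (fun a => Nat.Coprime a n) (Finset.Icc 1 n),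
    (fun y : ℝ => (y : UnitAddCircle)) '' Set.Ioo (((a : ℝ) - ψ n) / n) (((a : ℝ) + ψ n) / n)

theorem gcd_le_of_overlap (ψ : ℕ → ℝ) (hψ : ∀ n, 0 ≤ ψ n) (m n : ℕ)
    (hm : 0 < m) (hn : 0 < n) (hmn : m ≠ n)
    (hpos : 0 < volume (ECirc ψ m ∩ ECirc ψ n)) :
    (Nat.gcd m n : ℝ) ≤ ψ m * n + ψ n * m := by
  obtain ⟨z, hzm, hzn⟩ := nonempty_of_measure_ne_zero hpos.ne'
  simp only [ECirc, Set.mem_iUnion, Finset.mem_filter, Finset.mem_Icc, Set.mem_image,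
    Set.mem_Ioo] at hzm hzn
  obtain ⟨a, ⟨⟨ha1, ham⟩, hacop⟩, x, ⟨hx1, hx2⟩, hxz⟩ := hzm
  obtain ⟨b, ⟨⟨hb1, hbn⟩, hbcop⟩, y, ⟨hy1, hy2⟩, hyz⟩ := hzn
  have hxy : (x : UnitAddCircle) = (y : ℝ) := by rw [hxz, hyz]
  rw [QuotientAddGroup.eq_iff_sub_mem] at hxy
  obtain ⟨k, hk⟩ := hxy
  have hk' : x - y = (k : ℝ) := by simpa using hk.symm
  have hmR : (0:ℝ) < m := Nat.cast_pos.mpr hm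
  have hnR : (0:ℝ) < n := Nat.cast_pos.mpr hn
  -- bounds
  have hxm : |x * m - a| < ψ m := by
    rw [abs_lt]
    constructor
    · have := (div_lt_iff₀ hmR).mp hx1
      linarith
    · have := (lt_div_iff₀ hmR).mp hx2
      linarith
  have hyn : |y * n - b| < ψ n := by
    rw [abs_lt]
    constructor
    · have := (div_lt_iff₀ hnR).mp hy1
      linarith
    · have := (lt_div_iff₀ hnR).mp hy2
      linarith
  set N : ℤ := (a : ℤ) * n - b * m - k * m * n with hN
  have hNR : (N : ℝ) = -((x * m - a) * n) + (y * n - b) * m := by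
    push_cast [hN]
    have : x * (m : ℝ) * n - y * n * m = (k : ℝ) * m * n := by
      rw [← hk']; ring
    nlinarith [this]
  have hNbound : |(N : ℝ)| < ψ m * n + ψ n * m := by
    rw [hNR]
    calc |-((x * m - a) * n) + (y * n - b) * m|
        ≤ |(x * m - a) * n| + |(y * n - b) * m| := by
          simpa [abs_neg] using abs_add_le (-((x * m - a) * n)) ((y * n - b) * m)
      _ = |x * m - a| * n + |y * n - b| * m := by
          rw [abs_mul, abs_mul, abs_of_pos hmR, abs_of_pos hnR]
      _ < ψ m * n + ψ n * m := by
          apply add_lt_add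
          · exact mul_lt_mul_of_pos_right hxm hnR
          · exact mul_lt_mul_of_pos_right hyn hmR
  have hNne : N ≠ 0 := by
    intro h0
    have h1 : (a : ℤ) * n = b * m + k * m * n := by linarith [hN ▸ h0, sub_eq_zero.mp (by linarith [h0] : (a:ℤ)*n - b*m - k*m*n = 0)]
    have hcm : IsCoprime (m : ℤ) (a : ℤ) :=
      Nat.isCoprime_iff_coprime.mpr (Nat.coprime_comm.mp hacop)
    have hcn : IsCoprime (n : ℤ) (b : ℤ) :=
      Nat.isCoprime_iff_coprime.mpr (Nat.coprime_comm.mp hbcop)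
    have hdm : (m : ℤ) ∣ (a : ℤ) * n := ⟨b + k * n, by linear_combination h1⟩
    have hdn : (n : ℤ) ∣ (b : ℤ) * m := ⟨a - k * m, by linear_combination -h1⟩
    have h2 : (m : ℤ) ∣ (n : ℤ) := hcm.dvd_of_dvd_mul_left hdm
    have h3 : (n : ℤ) ∣ (m : ℤ) := hcn.dvd_of_dvd_mul_left hdn
    have : (m : ℤ) = n := Int.dvd_antisymm (by positivity) (by positivity) h2 h3
    exact hmn (by exact_mod_cast this)
  have hgdvd : (Nat.gcd m n : ℤ) ∣ N := by
    have h1 : (Nat.gcd m n : ℤ) ∣ (m : ℤ) := Int.natCast_dvd_natCast.mpr (Nat.gcd_dvd_left m n)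
    have h2 : (Nat.gcd m n : ℤ) ∣ (n : ℤ) := Int.natCast_dvd_natCast.mpr (Nat.gcd_dvd_right m n)
    exact dvd_sub (dvd_sub (h2.mul_left _) (h1.mul_left _)) ((h1.mul_left _).mul_right _)
  have hgle : (Nat.gcd m n : ℤ) ≤ |N| :=
    Int.le_of_dvd (abs_pos.mpr hNne) (hgdvd.trans (self_dvd_abs N))
  have : (Nat.gcd m n : ℝ) ≤ |(N : ℝ)| := by
    rw [← Int.cast_abs]
    exact_mod_cast hgle
  linarith
end

section
/- There exists a constant c > 0 such that the inequality ∏_{p prime, p | n} (1 − 1/p)^{−1} ≥ c · log(log n) holds for infinitely many positive integers n. -/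
open Filter Finset Nat

-- Euler product lower bound: product over primes below N of (1-1/p)⁻¹
-- is at least the harmonic sum.
lemma prod_primesBelow_ge_harmonic (N : ℕ) :
    (harmonic (N - 1) : ℝ) ≤ ∏ p ∈ Nat.primesBelow N, (1 - 1 / (p : ℝ))⁻¹ := by
  classical
  set f : ℕ → ℝ := fun n => 1 / (n : ℝ) with hf
  have hf₁ : f 1 = 1 := by simp [hf]
  have hmul : ∀ {m n : ℕ}, Nat.Coprime m n → f (m * n) = f m * f n := by
    intro m n _
    simp [hf, Nat.cast_mul]
    ring
  have hsum : ∀ {p : ℕ}, p.Prime → Summable (fun n : ℕ ↦ ‖f (p ^ n)‖) := by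
    intro p hp
    have h1 : (1 / (p : ℝ)) < 1 := by
      rw [div_lt_one (by exact_mod_cast hp.pos)]
      exact_mod_cast hp.one_lt
    have : (fun n : ℕ ↦ ‖f (p ^ n)‖) = fun n : ℕ ↦ (1 / (p : ℝ)) ^ n := by
      funext n
      simp only [hf, Nat.cast_pow, Real.norm_eq_abs, one_div, inv_pow]
      rw [abs_of_nonneg (by positivity)]
    rw [this]
    exact summable_geometric_of_lt_one (by positivity) h1
  obtain ⟨-, hsum2⟩ := EulerProduct.summable_and_hasSum_smoothNumbers_prod_primesBelow_tsum
    hf₁ hmul hsum N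
  -- identify the tsum factors
  have hfac : ∀ p ∈ Nat.primesBelow N, (∑' n : ℕ, f (p ^ n)) = (1 - 1 / (p : ℝ))⁻¹ := by
    intro p hp
    have hp' := Nat.prime_of_mem_primesBelow hp
    have h1 : (1 / (p : ℝ)) < 1 := by
      rw [div_lt_one (by exact_mod_cast hp'.pos)]
      exact_mod_cast hp'.one_lt
    have : (fun n : ℕ ↦ f (p ^ n)) = fun n : ℕ ↦ (1 / (p : ℝ)) ^ n := by
      funext n
      simp [hf, Nat.cast_pow, one_div, inv_pow]
    rw [this, tsum_geometric_of_lt_one (by positivity) h1]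
  rw [← Finset.prod_congr rfl hfac]
  -- lower bound the sum by the finite harmonic sum
  set s : Finset N.smoothNumbers :=
    (Finset.range (N - 1)).attach.image
      (fun j => (⟨j.1 + 1, by
        refine Nat.mem_smoothNumbers'.mpr ?_
        intro p hpp hpd
        have := Nat.le_of_dvd j.1.succ_pos hpd
        have hj := Finset.mem_range.mp j.2
        omega⟩ : N.smoothNumbers)) with hs
  have key : ∑ x ∈ s, f x ≤ ∏ p ∈ N.primesBelow, ∑' n : ℕ, f (p ^ n) :=
    sum_le_hasSum s (fun i _ => by positivity) hsum2
  have hsval : ∑ x ∈ s, f x = (harmonic (N - 1) : ℝ) := by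
    rw [hs, Finset.sum_image (by
      intro a _ b _ hab
      have h := congrArg Subtype.val hab
      simp only at h
      exact Subtype.ext (by omega))]
    rw [Finset.sum_attach (Finset.range (N - 1)) (fun j => f (j + 1))]
    simp only [harmonic, Rat.cast_sum, Rat.cast_inv, Rat.cast_natCast, hf]
    simp [one_div]
  calc (harmonic (N - 1) : ℝ) = ∑ x ∈ s, f x := hsval.symm
    _ ≤ ∏ p ∈ N.primesBelow, ∑' n : ℕ, f (p ^ n) := key

theorem mertens_product_large_infinitely_often :
    ∃ c : ℝ, 0 < c ∧
      {n : ℕ | 0 < n ∧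
        c * Real.log (Real.log n) ≤ ∏ p ∈ n.primeFactors, (1 - 1 / (p : ℝ))⁻¹}.Infinite := by
  refine ⟨1/2, by norm_num, ?_⟩
  have main : ∀ m : ℕ, 3 ≤ m → (m ! : ℕ) ∈ {n : ℕ | 0 < n ∧
      (1/2 : ℝ) * Real.log (Real.log n) ≤ ∏ p ∈ n.primeFactors, (1 - 1 / (p : ℝ))⁻¹} := by
    intro m hm
    refine ⟨m.factorial_pos, ?_⟩
    -- Step 1: log log m! ≤ 2 log (m+1)
    have hfac_le : (m ! : ℝ) ≤ (m : ℝ) ^ m := by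
      exact_mod_cast Nat.factorial_le_pow m
    have hfac_pos : (0:ℝ) < (m ! : ℝ) := by exact_mod_cast m.factorial_pos
    have hlogfac_le : Real.log (m !) ≤ ((m : ℝ) + 1) ^ 2 := by
      calc Real.log (m !) ≤ Real.log ((m : ℝ) ^ m) := Real.log_le_log hfac_pos hfac_le
        _ = m * Real.log m := by rw [Real.log_pow]
        _ ≤ ((m : ℝ) + 1) ^ 2 := by
            have hm0 : (0:ℝ) < m := by exact_mod_cast (by omega : 0 < m)
            have hl : Real.log m ≤ (m:ℝ) := (Real.log_le_sub_one_of_pos hm0).trans (by linarith)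
            have hl0 : 0 ≤ Real.log m := Real.log_nonneg (by exact_mod_cast (by omega : 1 ≤ m))
            nlinarith
    have hlogfac_pos : 0 < Real.log (m !) := by
      refine Real.log_pos ?_
      have : 6 ≤ m ! := by
        calc 6 = 3 ! := rfl
        _ ≤ m ! := Nat.factorial_le hm
      exact_mod_cast by omega
    have h1 : Real.log (Real.log (m !)) ≤ 2 * Real.log ((m : ℝ) + 1) := by
      calc Real.log (Real.log (m !)) ≤ Real.log (((m : ℝ) + 1) ^ 2) :=
            Real.log_le_log hlogfac_pos hlogfac_le
        _ = 2 * Real.log ((m : ℝ) + 1) := by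
            rw [Real.log_pow]; norm_num
    -- Step 2: log (m+1) ≤ harmonic m
    have h2 : Real.log ((m : ℝ) + 1) ≤ (harmonic m : ℝ) := by
      have := log_add_one_le_harmonic m
      exact_mod_cast this
    -- Step 3: harmonic m ≤ product over primesBelow (m+1)
    have h3 : (harmonic m : ℝ) ≤ ∏ p ∈ Nat.primesBelow (m + 1), (1 - 1 / (p : ℝ))⁻¹ := by
      simpa using prod_primesBelow_ge_harmonic (m + 1)
    -- Step 4: primesBelow (m+1) ⊆ primeFactors m!
    have h4 : ∏ p ∈ Nat.primesBelow (m + 1), (1 - 1 / (p : ℝ))⁻¹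
        ≤ ∏ p ∈ (m !).primeFactors, (1 - 1 / (p : ℝ))⁻¹ := by
      have hsub : Nat.primesBelow (m + 1) ⊆ (m !).primeFactors := by
        intro p hp
        have hp' := Nat.prime_of_mem_primesBelow hp
        have hplt := Nat.lt_of_mem_primesBelow hp
        exact Nat.mem_primeFactors.mpr ⟨hp', Nat.dvd_factorial hp'.pos (by omega),
          m.factorial_ne_zero⟩
      have hone : ∀ p ∈ (m !).primeFactors, (1:ℝ) ≤ (1 - 1 / (p : ℝ))⁻¹ := by
        intro p hp
        have hp' := Nat.prime_of_mem_primeFactors hp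
        have hlt : (1:ℝ) / p < 1 := by
          rw [div_lt_one (by exact_mod_cast hp'.pos)]
          exact_mod_cast hp'.one_lt
        have hpos : (0:ℝ) < 1 - 1 / p := by linarith
        rw [le_inv_comm₀ one_pos hpos]
        linarith [div_nonneg (zero_le_one (α := ℝ)) (le_of_lt (by exact_mod_cast hp'.pos : (0:ℝ) < p))]
      have hnn : ∀ p ∈ (m !).primeFactors, (0:ℝ) ≤ (1 - 1 / (p : ℝ))⁻¹ := fun p hp =>
        le_trans zero_le_one (hone p hp)
      calc ∏ p ∈ Nat.primesBelow (m + 1), (1 - 1 / (p : ℝ))⁻¹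
          ≤ (∏ p ∈ (m !).primeFactors \ Nat.primesBelow (m+1), (1 - 1 / (p : ℝ))⁻¹)
            * ∏ p ∈ Nat.primesBelow (m + 1), (1 - 1 / (p : ℝ))⁻¹ := by
            have h1p : (1:ℝ) ≤ ∏ p ∈ (m !).primeFactors \ Nat.primesBelow (m+1),
                (1 - 1 / (p : ℝ))⁻¹ := by
              calc (1:ℝ) = ∏ _p ∈ (m !).primeFactors \ Nat.primesBelow (m+1), (1:ℝ) := by simp
                _ ≤ _ := Finset.prod_le_prod (fun _ _ => zero_le_one)
                    (fun p hp => hone p (Finset.mem_sdiff.mp hp).1)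
            exact le_mul_of_one_le_left (Finset.prod_nonneg fun p hp => hnn p (hsub hp)) h1p
        _ = ∏ p ∈ (m !).primeFactors, (1 - 1 / (p : ℝ))⁻¹ := Finset.prod_sdiff hsub
    calc (1/2 : ℝ) * Real.log (Real.log (m ! : ℕ)) ≤ (1/2 : ℝ) * (2 * Real.log ((m:ℝ)+1)) := by
          refine mul_le_mul_of_nonneg_left ?_ (by norm_num)
          exact_mod_cast h1
      _ = Real.log ((m:ℝ)+1) := by ring
      _ ≤ (harmonic m : ℝ) := h2
      _ ≤ ∏ p ∈ Nat.primesBelow (m + 1), (1 - 1 / (p : ℝ))⁻¹ := h3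
      _ ≤ ∏ p ∈ (m !).primeFactors, (1 - 1 / (p : ℝ))⁻¹ := h4
  refine Set.infinite_of_injective_forall_mem (f := fun k : ℕ => (k + 3)!) ?_ ?_
  · intro a b hab
    simp only at hab
    by_contra h
    rcases Nat.lt_or_ge a b with hlt | hge
    · exact absurd hab (Nat.ne_of_lt (Nat.factorial_lt_of_lt (by omega) (by omega)))
    · exact absurd hab.symm (Nat.ne_of_lt (Nat.factorial_lt_of_lt (by omega) (by omega)))
  · intro k
    exact main (k + 3) (by omega)
end

section
/- There exists a universal constant c₂ > 0 such that for every integer n ≥ 2, ∏_{p prime, p | n, p > √(log n)} (1 − 1/p)^{−1} ≤ c₂. -/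
open Filter Finset
open scoped Classical

noncomputable def cheb (x : ℕ) : ℝ := ∑ p ∈ (range (x+1)).filter Nat.Prime, Real.log p

noncomputable def mertA (x : ℕ) : ℝ := ∑ p ∈ (range (x+1)).filter Nat.Prime, Real.log p / p

lemma cheb_nonneg (x : ℕ) : 0 ≤ cheb x := by
  apply Finset.sum_nonneg
  intro p hp
  simp only [mem_filter, mem_range] at hp
  exact Real.log_nonneg (by exact_mod_cast hp.2.one_lt.le)

lemma cheb_le (x : ℕ) : cheb x ≤ x * Real.log 4 := by
  have h1 : cheb x = Real.log (primorial x : ℝ) := by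
    rw [primorial]
    push_cast
    rw [Real.log_prod]
    · rfl
    · intro p hp
      simp only [mem_filter, mem_range] at hp
      exact_mod_cast hp.2.pos.ne'
  rw [h1]
  calc Real.log (primorial x : ℝ) ≤ Real.log ((4:ℝ) ^ x) := by
        apply Real.log_le_log (by exact_mod_cast (primorial_pos x))
        exact_mod_cast primorial_le_4_pow x
    _ = x * Real.log 4 := by rw [Real.log_pow]

lemma cheb_succ (x : ℕ) :
    cheb (x+1) = cheb x + (if Nat.Prime (x+1) then Real.log (x+1) else 0) := by
  rw [cheb, cheb, Finset.range_add_one, Finset.filter_insert]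
  split <;> simp [Finset.sum_insert, Finset.mem_filter, add_comm]

lemma mertA_succ (x : ℕ) :
    mertA (x+1) = mertA x + (if Nat.Prime (x+1) then Real.log (x+1) / (x+1) else 0) := by
  rw [mertA, mertA, Finset.range_add_one, Finset.filter_insert]
  split <;> simp [Finset.sum_insert, Finset.mem_filter, add_comm]

lemma mertA_le (x : ℕ) :
    mertA x ≤ cheb x / x + Real.log 4 * ∑ k ∈ range x, (1:ℝ)/(k+1) := by
  induction x with
  | zero =>
    norm_num [mertA, cheb, Finset.filter_singleton, Nat.not_prime_zero]
  | succ x ih =>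
    rw [mertA_succ, cheb_succ, Finset.sum_range_succ, mul_add]
    have hx1 : (0:ℝ) < (x:ℝ) + 1 := by positivity
    have hlog4 : 0 < Real.log 4 := Real.log_pos (by norm_num)
    have key : cheb x / x ≤ cheb x / ((x:ℝ)+1) + Real.log 4 / ((x:ℝ)+1) := by
      rcases Nat.eq_zero_or_pos x with h0 | h0
      · subst h0
        norm_num [cheb, Finset.filter_singleton, Nat.not_prime_zero]
        positivity
      · have hx0 : (0:ℝ) < x := by exact_mod_cast h0
        rw [← add_div, div_le_div_iff₀ hx0 hx1]
        nlinarith [cheb_le x]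
    have h4 : Real.log 4 * ((1:ℝ)/((x:ℝ)+1)) = Real.log 4 / ((x:ℝ)+1) := by
      rw [mul_one_div]
    push_cast
    rw [h4]
    split
    · rw [add_div]
      linarith [ih, key]
    · simp only [add_zero]
      linarith [ih, key]

lemma harmonic_le (x : ℕ) (hx : 1 ≤ x) :
    ∑ k ∈ range x, (1:ℝ)/(k+1) ≤ 1 + Real.log x := by
  induction x with
  | zero => omega
  | succ x ih =>
    rcases Nat.eq_zero_or_pos x with h0 | h0
    · subst h0; simp
    · have hx0 : (0:ℝ) < x := by exact_mod_cast h0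
      have step : (1:ℝ)/(x+1) ≤ Real.log (x+1) - Real.log x := by
        have h := Real.log_le_sub_one_of_pos (x := (x:ℝ)/((x:ℝ)+1)) (by positivity)
        rw [Real.log_div (ne_of_gt hx0) (by positivity)] at h
        have h2 : (x:ℝ)/((x:ℝ)+1) - 1 = -(1/((x:ℝ)+1)) := by field_simp; ring
        linarith
      rw [Finset.sum_range_succ]
      push_cast
      linarith [ih h0]

lemma mertens_first (x : ℕ) (hx : 1 ≤ x) :
    mertA x ≤ Real.log 4 * (2 + Real.log x) := by
  have h1 := mertA_le x
  have h2 := harmonic_le x hx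
  have hx0 : (0:ℝ) < x := by exact_mod_cast hx
  have hlog4 : 0 < Real.log 4 := Real.log_pos (by norm_num)
  have h3 : cheb x / x ≤ Real.log 4 := by
    rw [div_le_iff₀ hx0]
    linarith [cheb_le x]
  nlinarith [h1, h2, h3, Real.log_nonneg (by exact_mod_cast hx : (1:ℝ) ≤ x)]

lemma sum_one_div_primes_le (M x : ℕ) (hM : 2 ≤ M) :
    ∑ p ∈ (range (x+1)).filter (fun p => Nat.Prime p ∧ M < p), (1:ℝ)/p
      ≤ mertA x / Real.log M := by
  have hlogM : 0 < Real.log M := Real.log_pos (by exact_mod_cast hM)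
  calc ∑ p ∈ (range (x+1)).filter (fun p => Nat.Prime p ∧ M < p), (1:ℝ)/p
      ≤ ∑ p ∈ (range (x+1)).filter (fun p => Nat.Prime p ∧ M < p), (Real.log p / p) / Real.log M := by
        apply Finset.sum_le_sum
        intro p hp
        simp only [mem_filter, mem_range] at hp
        have hp0 : (0:ℝ) < p := by exact_mod_cast hp.2.1.pos
        have hMp : Real.log M ≤ Real.log p := by
          apply Real.log_le_log (by exact_mod_cast (by omega : 0 < M))
          exact_mod_cast hp.2.2.le
        rw [div_div, div_le_div_iff₀ hp0 (by positivity)]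
        nlinarith
    _ ≤ mertA x / Real.log M := by
        rw [← Finset.sum_div]
        gcongr
        apply Finset.sum_le_sum_of_subset_of_nonneg
        · intro p hp
          simp only [mem_filter, mem_range] at hp ⊢
          exact ⟨hp.1, hp.2.1⟩
        · intro p hp _
          simp only [mem_filter, mem_range] at hp
          have hp1 : (1:ℝ) ≤ p := by exact_mod_cast hp.2.one_lt.le
          have := Real.log_nonneg hp1
          positivity

lemma factor_pos {q : ℝ} (hq : 2 ≤ q) : 0 < 1 - 1/q := by
  have hq0 : (0:ℝ) < q := by linarith
  rw [sub_pos, div_lt_one hq0]; linarith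

lemma factor_le_exp {q : ℝ} (hq : 2 ≤ q) : (1 - 1/q)⁻¹ ≤ Real.exp (2/q) := by
  have hq0 : (0:ℝ) < q := by linarith
  have h1 := factor_pos hq
  have hinv : 1/q ≤ 1/2 := by
    rw [div_le_div_iff₀ hq0 (by norm_num)]; linarith
  have hinv0 : (0:ℝ) < 1/q := by positivity
  have h2 : (1 - 1/q)⁻¹ ≤ 1 + 2/q := by
    rw [inv_eq_one_div, div_le_iff₀ h1]
    have e : (1 + 2/q) * (1 - 1/q) = 1 + (1/q) - 2*(1/q)^2 := by
      field_simp; ring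
    rw [e]
    nlinarith
  calc (1 - 1/q)⁻¹ ≤ 1 + 2/q := h2
    _ ≤ Real.exp (2/q) := by linarith [Real.add_one_le_exp (2/q)]

lemma factor_le_self {q : ℝ} (hq : 2 ≤ q) : (1 - 1/q)⁻¹ ≤ q := by
  have hq0 : (0:ℝ) < q := by linarith
  have h1 := factor_pos hq
  rw [inv_eq_one_div, div_le_iff₀ h1]
  have e : q * (1 - 1/q) = q - 1 := by field_simp
  rw [e]; linarith

set_option maxHeartbeats 1000000 in
theorem product_over_large_primes_bounded :
    ∃ c₂ : ℝ, 0 < c₂ ∧ ∀ n : ℕ, 2 ≤ n →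
      ∏ p ∈ n.primeFactors.filter (fun p : ℕ => Real.sqrt (Real.log n) < (p : ℝ)),
        (1 - 1 / (p : ℝ))⁻¹ ≤ c₂ := by
  refine ⟨Real.exp 40, Real.exp_pos 40, ?_⟩
  intro n hn
  set L : ℝ := Real.log n with hLdef
  set S : Finset ℕ := n.primeFactors.filter (fun p : ℕ => Real.sqrt L < (p : ℝ)) with hSdef
  have hn0 : 0 < n := by omega
  have hn0' : (0:ℝ) < n := by exact_mod_cast hn0
  have hprime : ∀ p ∈ S, Nat.Prime p := fun p hp =>
    Nat.prime_of_mem_primeFactors (Finset.mem_filter.mp hp).1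
  have hp2 : ∀ p ∈ S, (2:ℝ) ≤ (p:ℝ) := fun p hp => by
    exact_mod_cast (hprime p hp).two_le
  have hlog2pos : (0:ℝ) < Real.log 2 := Real.log_pos (by norm_num)
  have hlog2lb := Real.log_two_gt_d9
  have hlog2ub := Real.log_two_lt_d9
  by_cases hbig : 10000000 ≤ n
  · -- large n
    have hL16 : (16:ℝ) ≤ L := by
      have h1 : Real.exp 16 ≤ (n:ℝ) := by
        calc Real.exp 16 = (Real.exp 1)^16 := by rw [← Real.exp_nat_mul]; norm_num
          _ ≤ 2.7182818286^16 := pow_le_pow_left₀ (Real.exp_pos 1).le Real.exp_one_lt_d9.le 16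
          _ ≤ 10000000 := by norm_num
          _ ≤ (n:ℝ) := by exact_mod_cast hbig
      calc (16:ℝ) = Real.log (Real.exp 16) := (Real.log_exp 16).symm
        _ ≤ L := Real.log_le_log (Real.exp_pos 16) h1
    have hL0 : (0:ℝ) < L := by linarith
    have hlog4 : Real.log 4 = 2 * Real.log 2 := by
      rw [show (4:ℝ) = 2^2 by norm_num, Real.log_pow]; push_cast; ring
    have hlogL : Real.log 16 ≤ Real.log L := Real.log_le_log (by norm_num) hL16
    have hlog16 : Real.log 16 = 4 * Real.log 2 := by
      rw [show (16:ℝ) = 2^4 by norm_num, Real.log_pow]; push_cast; ring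
    have hGlb : 4 * Real.log 2 ≤ Real.log L := by rw [← hlog16]; exact hlogL
    -- the integer threshold M
    set M : ℕ := ⌊Real.sqrt L⌋₊ with hMdef
    have hsqrt4 : (4:ℝ) ≤ Real.sqrt L := by
      rw [show (4:ℝ) = Real.sqrt 16 by
        rw [show (16:ℝ) = 4^2 by norm_num, Real.sqrt_sq (by norm_num)]]
      exact Real.sqrt_le_sqrt hL16
    have hM4 : 4 ≤ M := Nat.le_floor (by exact_mod_cast hsqrt4)
    have hMle : (M:ℝ) ≤ Real.sqrt L := Nat.floor_le (Real.sqrt_nonneg L)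
    have hlogM_lb : Real.log L / 4 ≤ Real.log M := by
      have hM2 : Real.sqrt L / 2 ≤ (M:ℝ) := by
        have := Nat.lt_floor_add_one (Real.sqrt L)
        have hM' : Real.sqrt L - 1 < (M:ℝ) := by
          rw [hMdef]; linarith
        linarith [hsqrt4]
      have h1 : Real.log (Real.sqrt L / 2) ≤ Real.log M := by
        apply Real.log_le_log (by positivity) hM2
      rw [Real.log_div (by positivity) (by norm_num), Real.log_sqrt hL0.le] at h1
      linarith
    have hlogM_pos : (0:ℝ) < Real.log M :=
      Real.log_pos (by exact_mod_cast (by omega : 1 < M))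
    -- the integer cutoff X
    set X : ℕ := ⌈L * L⌉₊ with hXdef
    have hLL : L * L ≤ (X:ℝ) := Nat.le_ceil _
    have hXub : (X:ℝ) ≤ L * L + 1 := (Nat.ceil_lt_add_one (by positivity)).le
    have hX256 : (256:ℝ) ≤ (X:ℝ) := by nlinarith
    have hX0 : (0:ℝ) < (X:ℝ) := by linarith
    have hX1 : 1 ≤ X := by
      have h : (1:ℝ) ≤ (X:ℝ) := by linarith
      exact_mod_cast h
    have hlogX : Real.log X ≤ Real.log 2 + 2 * Real.log L := by
      calc Real.log X ≤ Real.log (2 * L * L) := by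
            apply Real.log_le_log hX0
            nlinarith
        _ = Real.log 2 + 2 * Real.log L := by
            rw [mul_assoc, Real.log_mul (by norm_num) (by positivity),
              Real.log_mul (by positivity) (by positivity)]
            ring
    -- sum over small part
    have hsum1 : ∑ p ∈ S.filter (fun p => p ≤ X), (1:ℝ)/p ≤ 17 := by
      have hsub : S.filter (fun p => p ≤ X) ⊆
          (range (X+1)).filter (fun p => Nat.Prime p ∧ M < p) := by
        intro p hp
        rw [Finset.mem_filter] at hp
        have hpS := hp.1
        have hprimep := hprime p hpS
        have hpM : M < p := by
          have h1 : Real.sqrt L < (p:ℝ) := (Finset.mem_filter.mp hpS).2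
          have h2 : (M:ℝ) < (p:ℝ) := lt_of_le_of_lt hMle h1
          exact_mod_cast h2
        simp only [mem_filter, mem_range]
        exact ⟨by omega, hprimep, hpM⟩
      have h1 : ∑ p ∈ S.filter (fun p => p ≤ X), (1:ℝ)/p ≤
          ∑ p ∈ (range (X+1)).filter (fun p => Nat.Prime p ∧ M < p), (1:ℝ)/p := by
        apply Finset.sum_le_sum_of_subset_of_nonneg hsub
        intro p hp _
        positivity
      have h2 := sum_one_div_primes_le M X (by omega)
      have h3 := mertens_first X hX1
      have h4 : mertA X / Real.log M ≤ 17 := by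
        rw [div_le_iff₀ hlogM_pos]
        have key2 : (17/4 - 4*Real.log 2) * (4*Real.log 2) ≤ (17/4 - 4*Real.log 2) * Real.log L :=
          mul_le_mul_of_nonneg_left hGlb (by nlinarith)
        have key3 : (2*Real.log 2) * Real.log X ≤ (2*Real.log 2) * (Real.log 2 + 2*Real.log L) :=
          mul_le_mul_of_nonneg_left hlogX (by positivity)
        have key4 : Real.log 2 * Real.log 2 < Real.log 2 * 0.6931471808 :=
          mul_lt_mul_of_pos_left hlog2ub hlog2pos
        have key5 : Real.log 4 * (2 + Real.log X) ≤ 17 * Real.log M := by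
          rw [hlog4]
          linarith [key2, key3, key4, hlogM_lb, hlog2pos]
        linarith [h3, key5]
      linarith [h1, h2, h4]
    -- number of prime factors
    have hcard : (n.primeFactors.card : ℝ) ≤ 2 * L := by
      have h1 : 2 ^ n.primeFactors.card ≤ ∏ p ∈ n.primeFactors, p :=
        Finset.pow_card_le_prod _ _ _ (fun p hp => (Nat.prime_of_mem_primeFactors hp).two_le)
      have h2 : ∏ p ∈ n.primeFactors, p ≤ n := Nat.le_of_dvd hn0 (Nat.prod_primeFactors_dvd n)
      have h3 : (2:ℝ) ^ n.primeFactors.card ≤ (n:ℝ) := by exact_mod_cast h1.trans h2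
      have h4 : (n.primeFactors.card : ℝ) * Real.log 2 ≤ L := by
        calc (n.primeFactors.card : ℝ) * Real.log 2 = Real.log ((2:ℝ) ^ n.primeFactors.card) := by
              rw [Real.log_pow]
          _ ≤ L := Real.log_le_log (by positivity) h3
      nlinarith [(by positivity : (0:ℝ) ≤ (n.primeFactors.card:ℝ)), hlog2lb, h4]
    -- sum over large part
    have hsum2 : ∑ p ∈ S.filter (fun p => ¬ p ≤ X), (1:ℝ)/p ≤ 1 := by
      have hcard2 : ((S.filter (fun p => ¬ p ≤ X)).card : ℝ) ≤ 2 * L := by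
        have : (S.filter (fun p => ¬ p ≤ X)).card ≤ n.primeFactors.card :=
          Finset.card_le_card ((Finset.filter_subset _ _).trans (Finset.filter_subset _ _))
        calc ((S.filter (fun p => ¬ p ≤ X)).card : ℝ) ≤ (n.primeFactors.card : ℝ) := by
              exact_mod_cast this
          _ ≤ 2 * L := hcard
      calc ∑ p ∈ S.filter (fun p => ¬ p ≤ X), (1:ℝ)/p
          ≤ ∑ p ∈ S.filter (fun p => ¬ p ≤ X), (1:ℝ)/(X:ℝ) := by
            apply Finset.sum_le_sum
            intro p hp
            rw [Finset.mem_filter] at hp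
            have hXp : (X:ℝ) ≤ (p:ℝ) := by
              have : X ≤ p := by omega
              exact_mod_cast this
            exact one_div_le_one_div_of_le hX0 hXp
        _ = ((S.filter (fun p => ¬ p ≤ X)).card : ℝ) * (1/(X:ℝ)) := by
            rw [Finset.sum_const, nsmul_eq_mul]
        _ ≤ (2*L) * (1/(X:ℝ)) := by
            apply mul_le_mul_of_nonneg_right hcard2 (by positivity)
        _ ≤ 1 := by
            rw [mul_one_div, div_le_one hX0]
            nlinarith
    have hsumS : ∑ p ∈ S, (1:ℝ)/p ≤ 18 := by
      rw [← Finset.sum_filter_add_sum_filter_not S (fun p => p ≤ X) (fun p => (1:ℝ)/p)]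
      linarith
    calc ∏ p ∈ S, (1 - 1/(p:ℝ))⁻¹ ≤ ∏ p ∈ S, Real.exp (2/(p:ℝ)) := by
          apply Finset.prod_le_prod
          · intro p hp; exact (inv_pos.mpr (factor_pos (hp2 p hp))).le
          · intro p hp; exact factor_le_exp (hp2 p hp)
      _ = Real.exp (∑ p ∈ S, 2/(p:ℝ)) := (Real.exp_sum S _).symm
      _ ≤ Real.exp 40 := by
          rw [Real.exp_le_exp]
          have h : ∑ p ∈ S, 2/(p:ℝ) = 2 * ∑ p ∈ S, (1:ℝ)/p := by
            rw [Finset.mul_sum]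
            exact Finset.sum_congr rfl fun p _ => by ring
          rw [h]
          linarith
  · -- small n
    push_neg at hbig
    calc ∏ p ∈ S, (1 - 1/(p:ℝ))⁻¹ ≤ ∏ p ∈ S, (p:ℝ) := by
          apply Finset.prod_le_prod
          · intro p hp; exact (inv_pos.mpr (factor_pos (hp2 p hp))).le
          · intro p hp; exact factor_le_self (hp2 p hp)
      _ = ((∏ p ∈ S, p : ℕ) : ℝ) := by push_cast; rfl
      _ ≤ (n:ℝ) := by
          have hSsub : S ⊆ n.primeFactors := by rw [hSdef]; exact Finset.filter_subset _ _
          have hnat : (∏ p ∈ S, p : ℕ) ≤ n := by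
            calc (∏ p ∈ S, p : ℕ) ≤ ∏ p ∈ n.primeFactors, p := by
                  apply Finset.prod_le_prod_of_subset_of_one_le' hSsub
                  intro p hp _
                  exact (Nat.prime_of_mem_primeFactors hp).one_lt.le
              _ ≤ n := Nat.le_of_dvd hn0 (Nat.prod_primeFactors_dvd n)
          exact_mod_cast hnat
      _ ≤ Real.exp 40 := by
          have h1 : (n:ℝ) < 10000000 := by exact_mod_cast hbig
          have h2 : (2:ℝ)^40 ≤ Real.exp 40 := by
            calc (2:ℝ)^40 ≤ (Real.exp 1)^40 := by
                  apply pow_le_pow_left₀ (by norm_num)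
                  linarith [Real.exp_one_gt_d9]
              _ = Real.exp 40 := by rw [← Real.exp_nat_mul]; norm_num
          calc (n:ℝ) ≤ 10000000 := h1.le
            _ ≤ (2:ℝ)^40 := by norm_num
            _ ≤ Real.exp 40 := h2
end

section
/- There exist a constant ε₂ > 0 and a constant C > 0 such that for every integer n ≥ 3, τ(n) ≤ C · exp((1 − ε₂)·log n / log(log n)), where τ(n) denotes the number of positive divisors of n. -/
open Filter Finset
set_option maxHeartbeats 1000000 in

theorem divisor_bound :
    ∃ ε₂ : ℝ, 0 < ε₂ ∧ ∃ C : ℝ, 0 < C ∧ ∀ n : ℕ, 3 ≤ n →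
      (n.divisors.card : ℝ) ≤
        C * Real.exp ((1 - ε₂) * Real.log n / Real.log (Real.log n)) := by
  classical
  set c₀ : ℝ := Real.log (Real.log 3) with hc₀def
  have h3 : (1:ℝ) < Real.log 3 := by
    have := Real.exp_one_lt_d9
    calc (1:ℝ) = Real.log (Real.exp 1) := by rw [Real.log_exp]
    _ < Real.log 3 := by
        apply Real.log_lt_log (Real.exp_pos 1); linarith
  have hc₀ : 0 < c₀ := Real.log_pos h3
  set M : ℝ := 3072 * 20480 ^ 16 with hM
  have hMpos : (0:ℝ) < M := by positivity
  refine ⟨1/20, by norm_num, Real.exp (M / c₀), Real.exp_pos _, ?_⟩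
  intro n hn
  have hn0 : n ≠ 0 := by omega
  set L : ℝ := Real.log n with hL
  have hL3 : Real.log 3 ≤ L := by
    apply Real.log_le_log (by norm_num); exact_mod_cast hn
  have hL1 : (1:ℝ) ≤ L := le_trans h3.le hL3
  have hLpos : (0:ℝ) < L := lt_of_lt_of_le one_pos hL1
  set LL : ℝ := Real.log L with hLL
  have hLLc : c₀ ≤ LL := Real.log_le_log (by linarith) hL3
  have hLLpos : 0 < LL := lt_of_lt_of_le hc₀ hLLc
  -- log of tau as a sum
  have htau : (n.divisors.card : ℝ) = ∏ p ∈ n.primeFactors, ((n.factorization p : ℝ) + 1) := by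
    rw [Nat.card_divisors hn0]
    push_cast
    rfl
  have hlogsum : Real.log (n.divisors.card)
      = ∑ p ∈ n.primeFactors, Real.log ((n.factorization p : ℝ) + 1) := by
    rw [htau, Real.log_prod]
    intro p hp
    positivity
  -- log n as a sum
  have hlogn : L = ∑ p ∈ n.primeFactors, (n.factorization p : ℝ) * Real.log p := by
    rw [hL, Real.log_nat_eq_sum_factorization, Finsupp.sum, Nat.support_factorization]
  -- split
  set X : ℝ := Real.exp (7/8 * LL) with hX
  set S := n.primeFactors.filter (fun p : ℕ => (p:ℝ) ≤ X) with hS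
  set T := n.primeFactors.filter (fun p : ℕ => ¬ (p:ℝ) ≤ X) with hT
  have hsplit : Real.log (n.divisors.card)
      = ∑ p ∈ S, Real.log ((n.factorization p : ℝ) + 1)
      + ∑ p ∈ T, Real.log ((n.factorization p : ℝ) + 1) := by
    rw [hlogsum,
      ← Finset.sum_filter_add_sum_filter_not n.primeFactors (fun p : ℕ => (p:ℝ) ≤ X)]
  -- bound on exponents: a_p + 1 ≤ 3 L
  have haL : ∀ p ∈ n.primeFactors, (n.factorization p : ℝ) + 1 ≤ 3 * L := by
    intro p hp
    have hp2 : 2 ≤ p := (Nat.prime_of_mem_primeFactors hp).two_le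
    have hdvd : p ^ (n.factorization p) ∣ n := Nat.ordProj_dvd n p
    have hle : (p:ℝ) ^ (n.factorization p) ≤ n := by
      exact_mod_cast Nat.le_of_dvd (Nat.pos_of_ne_zero hn0) hdvd
    have hlog : (n.factorization p : ℝ) * Real.log p ≤ L := by
      rw [hL, ← Real.log_pow]
      apply Real.log_le_log (by positivity) hle
    have hlp : (1:ℝ)/2 ≤ Real.log p := by
      have : Real.log 2 ≤ Real.log p := Real.log_le_log (by norm_num) (by exact_mod_cast hp2)
      have h2 := Real.log_two_gt_d9
      linarith
    nlinarith [Nat.cast_nonneg (α := ℝ) (n.factorization p)]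
  -- small primes
  have hcardS : (S.card : ℝ) ≤ X := by
    have hsub : S ⊆ Finset.Icc 1 ⌊X⌋₊ := by
      intro p hp
      rw [hS, Finset.mem_filter] at hp
      rw [Finset.mem_Icc]
      constructor
      · exact (Nat.prime_of_mem_primeFactors hp.1).one_lt.le
      · exact Nat.le_floor hp.2
    calc (S.card : ℝ) ≤ ((Finset.Icc 1 ⌊X⌋₊).card : ℝ) := by
          exact_mod_cast Finset.card_le_card hsub
    _ = (⌊X⌋₊ : ℝ) := by rw [Nat.card_Icc]; simp
    _ ≤ X := Nat.floor_le (le_of_lt (Real.exp_pos _))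
  have hSsum : ∑ p ∈ S, Real.log ((n.factorization p : ℝ) + 1) ≤ X * Real.log (3 * L) := by
    have h1 : ∀ p ∈ S, Real.log ((n.factorization p : ℝ) + 1) ≤ Real.log (3 * L) := by
      intro p hp
      rw [hS, Finset.mem_filter] at hp
      apply Real.log_le_log (by positivity) (haL p hp.1)
    calc ∑ p ∈ S, Real.log ((n.factorization p : ℝ) + 1)
        ≤ ∑ _p ∈ S, Real.log (3 * L) := Finset.sum_le_sum h1
      _ = (S.card : ℝ) * Real.log (3 * L) := by rw [Finset.sum_const, nsmul_eq_mul]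
      _ ≤ X * Real.log (3 * L) := by
          apply mul_le_mul_of_nonneg_right hcardS
          apply Real.log_nonneg; linarith
  -- large primes
  have hTsum : ∑ p ∈ T, Real.log ((n.factorization p : ℝ) + 1) ≤ (4/5) * (L / LL) := by
    have hterm : ∀ p ∈ T, Real.log ((n.factorization p : ℝ) + 1)
        ≤ ((n.factorization p : ℝ) * Real.log p) * ((8 * Real.log 2) / (7 * LL)) := by
      intro p hp
      rw [hT, Finset.mem_filter] at hp
      have hXlt : X < (p:ℝ) := lt_of_not_ge hp.2
      have hlogp : 7/8 * LL ≤ Real.log p := by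
        rw [← Real.log_exp (7/8 * LL)]
        exact Real.log_le_log (Real.exp_pos _) hXlt.le
      have hstep : Real.log ((n.factorization p : ℝ) + 1)
          ≤ (n.factorization p : ℝ) * Real.log 2 := by
        rw [← Real.log_pow]
        apply Real.log_le_log (by positivity)
        have : n.factorization p + 1 ≤ 2 ^ (n.factorization p) := Nat.lt_two_pow_self
        exact_mod_cast this
      refine hstep.trans ?_
      have hl2 : (0:ℝ) < Real.log 2 := Real.log_pos (by norm_num)
      have hanneg : (0:ℝ) ≤ (n.factorization p : ℝ) := Nat.cast_nonneg _
      have h7 : (0:ℝ) < 7 * LL := by linarith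
      have heq : ((n.factorization p : ℝ) * Real.log p) * ((8 * Real.log 2) / (7 * LL))
          = ((n.factorization p : ℝ) * Real.log p * (8 * Real.log 2)) / (7 * LL) := by ring
      rw [heq, le_div_iff₀ h7]
      nlinarith [mul_le_mul_of_nonneg_left hlogp
        (by positivity : (0:ℝ) ≤ (n.factorization p : ℝ) * (8 * Real.log 2))]
    have hTsub : ∑ p ∈ T, (n.factorization p : ℝ) * Real.log p ≤ L := by
      rw [hlogn]
      apply Finset.sum_le_sum_of_subset_of_nonneg (Finset.filter_subset _ _)
      intro p hp _
      have hp2 : 2 ≤ p := (Nat.prime_of_mem_primeFactors hp).two_le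
      have : (0:ℝ) ≤ Real.log p := Real.log_nonneg (by exact_mod_cast Nat.one_le_of_lt hp2)
      positivity
    calc ∑ p ∈ T, Real.log ((n.factorization p : ℝ) + 1)
        ≤ ∑ p ∈ T, ((n.factorization p : ℝ) * Real.log p) * ((8 * Real.log 2) / (7 * LL)) :=
          Finset.sum_le_sum hterm
      _ = (∑ p ∈ T, (n.factorization p : ℝ) * Real.log p) * ((8 * Real.log 2) / (7 * LL)) := by
          rw [← Finset.sum_mul]
      _ ≤ L * ((8 * Real.log 2) / (7 * LL)) := by
          exact mul_le_mul_of_nonneg_right hTsub (by positivity)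
      _ ≤ (4/5) * (L / LL) := by
          have h2 := Real.log_two_lt_d9
          have e1 : L * ((8 * Real.log 2) / (7 * LL)) = (L * (8 * Real.log 2) / 7) / LL := by
            field_simp
          have e2 : (4/5 : ℝ) * (L / LL) = (4/5 * L) / LL := by ring
          rw [e1, e2, div_le_div_iff₀ hLLpos hLLpos]
          have h27 : Real.log 2 ≤ 0.7 := by linarith
          nlinarith [mul_nonneg (mul_nonneg hLpos.le hLLpos.le) (sub_nonneg.2 h27)]
  -- the analytic bound on the small-prime contribution
  have hkey : X * Real.log (3 * L) ≤ M / c₀ + (3/20) * (L / LL) := by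
    have hXL : X = L ^ ((7:ℝ)/8) := by
      rw [hX, Real.rpow_def_of_pos hLpos, hLL, mul_comm]
    have hq : (0:ℝ) ≤ L ^ ((1:ℝ)/32) := by positivity
    have hlog3L : Real.log (3 * L) ≤ 96 * L ^ ((1:ℝ)/32) := by
      have h1 : Real.log (3 * L) ≤ (3*L) ^ ((1:ℝ)/32) / (1/32) :=
        Real.log_le_rpow_div (by positivity) (by norm_num)
      have h2 : (3*L) ^ ((1:ℝ)/32) = 3 ^ ((1:ℝ)/32) * L ^ ((1:ℝ)/32) :=
        Real.mul_rpow (by norm_num) (by positivity)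
      have h3' : (3:ℝ) ^ ((1:ℝ)/32) ≤ 3 := by
        calc (3:ℝ) ^ ((1:ℝ)/32) ≤ 3 ^ (1:ℝ) :=
              Real.rpow_le_rpow_of_exponent_le (by norm_num) (by norm_num)
          _ = 3 := Real.rpow_one 3
      have h4 : (3:ℝ) ^ ((1:ℝ)/32) * L ^ ((1:ℝ)/32) ≤ 3 * L ^ ((1:ℝ)/32) :=
        mul_le_mul_of_nonneg_right h3' hq
      have h1' : Real.log (3 * L) ≤ 32 * ((3:ℝ) ^ ((1:ℝ)/32) * L ^ ((1:ℝ)/32)) := by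
        rw [← h2]; linarith
      linarith
    have hLLle : LL ≤ 32 * L ^ ((1:ℝ)/32) := by
      have := Real.log_le_rpow_div (le_of_lt hLpos) (show (0:ℝ) < 1/32 by norm_num)
      rw [hLL]; linarith
    -- product bound: X * log(3L) * LL ≤ 3072 * L^(15/16)
    have hprod : X * Real.log (3 * L) * LL ≤ 3072 * L ^ ((15:ℝ)/16) := by
      have hXpos : (0:ℝ) < X := Real.exp_pos _
      have hlogpos : (0:ℝ) ≤ Real.log (3*L) := Real.log_nonneg (by linarith)
      have e : L ^ ((7:ℝ)/8) * (96 * L ^ ((1:ℝ)/32)) * (32 * L ^ ((1:ℝ)/32))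
          = 3072 * L ^ ((15:ℝ)/16) := by
        rw [show ((15:ℝ)/16) = (7:ℝ)/8 + (1:ℝ)/32 + (1:ℝ)/32 by norm_num,
          Real.rpow_add hLpos, Real.rpow_add hLpos]
        ring
      calc X * Real.log (3*L) * LL ≤ X * (96 * L ^ ((1:ℝ)/32)) * (32 * L ^ ((1:ℝ)/32)) := by
            apply mul_le_mul
            · exact mul_le_mul_of_nonneg_left hlog3L (le_of_lt hXpos)
            · exact hLLle
            · exact le_of_lt hLLpos
            · positivity
        _ = 3072 * L ^ ((15:ℝ)/16) := by rw [hXL]; exact e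
    -- Young-type: 3072 * L^(15/16) ≤ M + (3/20) L
    have hyoung : 3072 * L ^ ((15:ℝ)/16) ≤ M + (3/20) * L := by
      rcases le_or_gt L ((20480:ℝ)^16) with hcase | hcase
      · have h1 : L ^ ((15:ℝ)/16) ≤ L := by
          calc L ^ ((15:ℝ)/16) ≤ L ^ (1:ℝ) :=
                Real.rpow_le_rpow_of_exponent_le hL1 (by norm_num)
            _ = L := Real.rpow_one L
        have h2 : 3072 * L ^ ((15:ℝ)/16) ≤ 3072 * (20480:ℝ)^16 := by nlinarith
        rw [hM]; linarith
      · have hB : ((20480:ℝ)^16 : ℝ) ^ ((1:ℝ)/16) = 20480 := by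
          rw [← Real.rpow_natCast (20480:ℝ) 16, ← Real.rpow_mul (by norm_num)]
          norm_num
        have h1 : (20480:ℝ) ≤ L ^ ((1:ℝ)/16) := by
          rw [← hB]
          exact Real.rpow_le_rpow (by positivity) hcase.le (by norm_num)
        have h2 : L ^ ((15:ℝ)/16) * L ^ ((1:ℝ)/16) = L := by
          rw [← Real.rpow_add hLpos]; norm_num
        have h3'' : (0:ℝ) < L ^ ((15:ℝ)/16) := Real.rpow_pos_of_pos hLpos _
        have h5 : 20480 * L ^ ((15:ℝ)/16) ≤ L := by
          nlinarith [mul_nonneg (sub_nonneg.2 h1) h3''.le]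
        linarith
    -- divide by LL
    have hMc : M ≤ (M / c₀) * LL := by
      rw [div_mul_eq_mul_div, le_div_iff₀ hc₀]
      nlinarith
    have final : X * Real.log (3 * L) * LL ≤ ((M / c₀) + (3/20) * (L/LL)) * LL := by
      have : ((M / c₀) + (3/20) * (L/LL)) * LL = (M/c₀)*LL + (3/20) * L := by
        field_simp
      rw [this]
      calc X * Real.log (3*L) * LL ≤ 3072 * L ^ ((15:ℝ)/16) := hprod
        _ ≤ M + (3/20)*L := hyoung
        _ ≤ (M/c₀)*LL + (3/20)*L := by linarith
    exact le_of_mul_le_mul_right final hLLpos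
  -- put it together
  have hlogτ : Real.log (n.divisors.card) ≤ M / c₀ + (19/20) * (L / LL) := by
    rw [hsplit]
    have := hSsum.trans hkey
    linarith
  have hτpos : (0:ℝ) < (n.divisors.card : ℝ) := by
    have : 0 < n.divisors.card := Finset.card_pos.2 (Nat.nonempty_divisors.2 hn0)
    exact_mod_cast this
  rw [← Real.log_le_log_iff hτpos (by positivity)]
  calc Real.log (n.divisors.card) ≤ M / c₀ + (19/20) * (L / LL) := hlogτ
    _ = Real.log (Real.exp (M / c₀) * Real.exp ((1 - 1/20) * L / LL)) := by
        rw [Real.log_mul (by positivity) (by positivity), Real.log_exp, Real.log_exp]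
        ring
end

section
/- (Gallagher's zero-one law.) For every nonnegative function ψ : ℕ → ℝ, the Lebesgue measure of W(ψ) is either 0 or 1: λ(W(ψ)∩[0,1)) ∈ {0, 1}. -/
open MeasureTheory Filter Finset
open scoped ENNReal


lemma mult_range (d : ℕ) (hd : 0 < d) (y : ℕ) :
    ((Finset.range y).filter (d ∣ ·)).card = (y + d - 1) / d := by
  induction y with
  | zero => simp [Nat.div_eq_of_lt, hd, Nat.sub_lt hd]
  | succ y ih =>
    rw [Finset.range_add_one, Finset.filter_insert]
    have h1 : y + 1 + d - 1 = (y + d - 1) + 1 := by omega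
    rw [h1, Nat.succ_div]
    have he : y + d - 1 + 1 = y + d := by omega
    have h2 : (d ∣ y + d - 1 + 1) ↔ d ∣ y := by rw [he]; exact Nat.dvd_add_self_right
    by_cases h : d ∣ y
    · rw [if_pos h, Finset.card_insert_of_notMem (by simp), ih, if_pos (h2.mpr h)]
    · rw [if_neg h, ih, if_neg (fun hc => h (h2.mp hc)), Nat.add_zero]

lemma mult_Ico_card (d x m : ℕ) (hd : 0 < d) :
    ((Finset.Ico x (x+m)).filter (d ∣ ·)).card
      = (x + m + d - 1) / d - (x + d - 1) / d := by
  have hsplit : Finset.range x ∪ Finset.Ico x (x+m) = Finset.range (x+m) := by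
    rw [Finset.range_eq_Ico, Finset.range_eq_Ico]
    exact Finset.Ico_union_Ico_eq_Ico (Nat.zero_le x) (Nat.le_add_right x m)
  have hdisj : Disjoint (Finset.range x) (Finset.Ico x (x+m)) := by
    simp only [Finset.disjoint_left, Finset.mem_range, Finset.mem_Ico]
    omega
  have := mult_range d hd (x+m)
  rw [← hsplit, Finset.filter_union,
    Finset.card_union_of_disjoint (hdisj.mono (Finset.filter_subset _ _) (Finset.filter_subset _ _)),
    mult_range d hd x] at this
  omega

lemma mult_Ico_bounds (d x m : ℕ) (hd : 0 < d) :
    (m:ℝ)/d - 1 ≤ ((Finset.Ico x (x+m)).filter (d ∣ ·)).card ∧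
    (((Finset.Ico x (x+m)).filter (d ∣ ·)).card : ℝ) ≤ m/d + 1 := by
  have hc := mult_Ico_card d x m hd
  set M := ((Finset.Ico x (x+m)).filter (d ∣ ·)).card with hM
  have hmul : d * M = d * ((x + m + d - 1) / d) - d * ((x + d - 1) / d) := by
    rw [hc, Nat.mul_sub]
  have h1 := Nat.div_add_mod (x + m + d - 1) d
  have h2 := Nat.div_add_mod (x + d - 1) d
  have m1 := Nat.mod_lt (x + m + d - 1) hd
  have m2 := Nat.mod_lt (x + d - 1) hd
  have hub : d * M + 1 ≤ m + d := by omega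
  have hlb : m + 1 ≤ d * M + d := by omega
  have hd' : (0:ℝ) < d := by exact_mod_cast hd
  have hubR : (d:ℝ) * M + 1 ≤ m + d := by exact_mod_cast hub
  have hlbR : (m:ℝ) + 1 ≤ d * M + d := by exact_mod_cast hlb
  constructor
  · rw [sub_le_iff_le_add, div_le_iff₀ hd']
    nlinarith
  · have : (↑M : ℝ) ≤ (↑m + ↑d)/ ↑d := by rw [le_div_iff₀ hd']; nlinarith
    calc (↑M:ℝ) ≤ (↑m + ↑d)/↑d := this
      _ = ↑m/↑d + 1 := by field_simp

lemma coprime_indicator (n a : ℕ) (hn : 0 < n) :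
    (if n.Coprime a then (1:ℝ) else 0)
      = ∏ p ∈ n.primeFactors, ((if p ∣ a then (-1:ℝ) else 0) + 1) := by
  by_cases h : n.Coprime a
  · rw [if_pos h]
    refine (Finset.prod_eq_one fun p hp => ?_).symm
    have hp' := Nat.prime_of_mem_primeFactors hp
    have hpn := Nat.dvd_of_mem_primeFactors hp
    have hpa : ¬ p ∣ a := fun hpa =>
      hp'.one_lt.ne' (Nat.dvd_one.mp (h ▸ Nat.dvd_gcd hpn hpa))
    rw [if_neg hpa, zero_add]
  · rw [if_neg h]
    obtain ⟨p, hp, hpd⟩ := Nat.exists_prime_and_dvd (fun h1 : Nat.gcd n a = 1 => h h1)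
    have hpn : p ∣ n := hpd.trans (Nat.gcd_dvd_left n a)
    have hpa : p ∣ a := hpd.trans (Nat.gcd_dvd_right n a)
    refine (Finset.prod_eq_zero (Nat.mem_primeFactors.mpr ⟨hp, hpn, hn.ne'⟩) ?_).symm
    rw [if_pos hpa]; ring

lemma prod_ite_dvd (t : Finset ℕ) (ht : ∀ p ∈ t, p.Prime) (a : ℕ) :
    ∏ p ∈ t, (if p ∣ a then (-1:ℝ) else 0)
      = if (∏ p ∈ t, p) ∣ a then (-1:ℝ)^t.card else 0 := by
  by_cases h : ∀ p ∈ t, p ∣ a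
  · rw [Finset.prod_congr rfl (fun p hp => if_pos (h p hp)), Finset.prod_const,
      if_pos (Finset.prod_primes_dvd a (fun p hp => (ht p hp).prime) h)]
  · push_neg at h
    obtain ⟨p, hp, hpa⟩ := h
    rw [if_neg (fun hd => hpa ((Finset.dvd_prod_of_mem (fun p => p) hp).trans hd))]
    exact Finset.prod_eq_zero hp (if_neg hpa)

lemma coprime_count (n x m : ℕ) (hn : 0 < n) :
    (m:ℝ) * ∏ p ∈ n.primeFactors, (1 - 1/(p:ℝ)) - 2^(n.primeFactors.card)
      ≤ (((Finset.Ico x (x+m)).filter (fun a => n.Coprime a)).card : ℝ) := by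
  set P := n.primeFactors with hP
  have hprime : ∀ p ∈ P, p.Prime := fun p hp => Nat.prime_of_mem_primeFactors hp
  have hcard : (((Finset.Ico x (x+m)).filter (fun a => n.Coprime a)).card : ℝ)
      = ∑ t ∈ P.powerset, (-1:ℝ)^t.card *
          (((Finset.Ico x (x+m)).filter ((∏ p ∈ t, p) ∣ ·)).card : ℝ) := by
    rw [← Finset.sum_boole]
    have : ∀ a ∈ Finset.Ico x (x+m), (if n.Coprime a then (1:ℝ) else 0)
        = ∑ t ∈ P.powerset, if (∏ p ∈ t, p) ∣ a then (-1:ℝ)^t.card else 0 := by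
      intro a _
      rw [coprime_indicator n a hn, Finset.prod_add]
      refine Finset.sum_congr rfl fun t ht => ?_
      rw [Finset.prod_const_one, mul_one,
        prod_ite_dvd t (fun p hp => hprime p (Finset.mem_powerset.mp ht hp)) a]
    rw [Finset.sum_congr rfl this, Finset.sum_comm]
    refine Finset.sum_congr rfl fun t _ => ?_
    rw [← Finset.sum_boole, Finset.mul_sum]
    refine Finset.sum_congr rfl fun a _ => ?_
    by_cases h : (∏ p ∈ t, p) ∣ a <;> simp [h]
  rw [hcard]
  have hdpos : ∀ t ∈ P.powerset, 0 < ∏ p ∈ t, p := fun t ht =>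
    Finset.prod_pos fun p hp => (hprime p (Finset.mem_powerset.mp ht hp)).pos
  have hbound : ∀ t ∈ P.powerset,
      (-1:ℝ)^t.card * ((m:ℝ)/(∏ p ∈ t, p)) - 1
        ≤ (-1:ℝ)^t.card * (((Finset.Ico x (x+m)).filter ((∏ p ∈ t, p) ∣ ·)).card : ℝ) := by
    intro t ht
    obtain ⟨hlb, hub⟩ := mult_Ico_bounds (∏ p ∈ t, p) x m (hdpos t ht)
    rcases Nat.even_or_odd t.card with he | ho
    · rw [he.neg_one_pow, one_mul, one_mul]; linarith
    · rw [ho.neg_one_pow, neg_one_mul, neg_one_mul]; linarith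
  refine le_trans ?_ (Finset.sum_le_sum hbound)
  rw [Finset.sum_sub_distrib, Finset.sum_const, Finset.card_powerset, nsmul_eq_mul]
  have hprod : ∑ t ∈ P.powerset, (-1:ℝ)^t.card * ((m:ℝ)/(∏ p ∈ t, p))
      = (m:ℝ) * ∏ p ∈ P, (1 - 1/(p:ℝ)) := by
    have : ∀ p ∈ P, (1 - 1/(p:ℝ)) = (-1/(p:ℝ)) + 1 := by intro p _; ring
    rw [Finset.prod_congr rfl this, Finset.prod_add, Finset.mul_sum]
    refine Finset.sum_congr rfl fun t ht => ?_
    rw [Finset.prod_const_one, mul_one]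
    have : ∏ p ∈ t, (-1/(p:ℝ)) = (-1:ℝ)^t.card / (∏ p ∈ t, (p:ℝ)) := by
      rw [Finset.prod_div_distrib, Finset.prod_const]
    rw [this, Nat.cast_prod]
    ring
  rw [hprod]
  push_cast
  gcongr <;> norm_num

lemma prod_one_sub_inv_ge (P : Finset ℕ) (hP : ∀ p ∈ P, 2 ≤ p) :
    (1:ℝ)/(P.card + 1) ≤ ∏ p ∈ P, (1 - 1/(p:ℝ)) := by
  induction P using Finset.induction_on_max with
  | empty => simp
  | insert a s ha ih =>
    have h2 : ∀ p ∈ s, 2 ≤ p := fun p hp => hP p (Finset.mem_insert_of_mem hp)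
    have ha2 : 2 ≤ a := hP a (Finset.mem_insert_self a s)
    have hcard : s.card + 2 ≤ a := by
      have hsub : s ⊆ Finset.Ico 2 a := fun p hp =>
        Finset.mem_Ico.mpr ⟨h2 p hp, ha p hp⟩
      have := Finset.card_le_card hsub
      rw [Nat.card_Ico] at this
      omega
    have hanotmem : a ∉ s := fun h => lt_irrefl a (ha a h)
    rw [Finset.prod_insert hanotmem]
    have hap : (0:ℝ) < a := by positivity
    have h1 : (0:ℝ) < s.card + 1 := by positivity
    have key : (1:ℝ)/(s.card + 1 + 1) ≤ (1 - 1/(a:ℝ)) * (1/(s.card + 1)) := by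
      have haR : ((s.card:ℝ) + 2) ≤ a := by exact_mod_cast hcard
      have heq : (1 - 1/(a:ℝ)) * (1/((s.card:ℝ) + 1)) = ((a:ℝ) - 1)/((a:ℝ)*((s.card:ℝ)+1)) := by
        field_simp
      rw [heq, div_le_div_iff₀ (by positivity) (by positivity)]
      nlinarith [Nat.cast_nonneg (α := ℝ) s.card]
    calc (1:ℝ)/((insert a s).card + 1) = 1/(s.card + 1 + 1) := by
          rw [Finset.card_insert_of_notMem hanotmem]; push_cast; ring_nf
      _ ≤ (1 - 1/(a:ℝ)) * (1/(s.card + 1)) := key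
      _ ≤ (1 - 1/(a:ℝ)) * ∏ p ∈ s, (1 - 1/(p:ℝ)) := by
          gcongr
          · have : (1:ℝ)/(a:ℝ) ≤ 1/2 := by
              apply div_le_div_of_nonneg_left one_pos.le two_pos
              exact_mod_cast ha2
            linarith
          · exact ih h2

lemma prod_ge_factorial (P : Finset ℕ) (hP : ∀ p ∈ P, 2 ≤ p) :
    Nat.factorial (P.card + 1) ≤ ∏ p ∈ P, p := by
  induction P using Finset.induction_on_max with
  | empty => simp
  | insert a s ha ih =>
    have h2 : ∀ p ∈ s, 2 ≤ p := fun p hp => hP p (Finset.mem_insert_of_mem hp)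
    have hcard : s.card + 2 ≤ a := by
      have hsub : s ⊆ Finset.Ico 2 a := fun p hp =>
        Finset.mem_Ico.mpr ⟨h2 p hp, ha p hp⟩
      have := Finset.card_le_card hsub
      rw [Nat.card_Ico] at this
      have := hP a (Finset.mem_insert_self a s)
      omega
    have hanotmem : a ∉ s := fun h => lt_irrefl a (ha a h)
    rw [Finset.prod_insert hanotmem, Finset.card_insert_of_notMem hanotmem]
    calc Nat.factorial (s.card + 1 + 1) = (s.card + 2) * Nat.factorial (s.card + 1) := rfl
      _ ≤ a * ∏ p ∈ s, p := Nat.mul_le_mul hcard (ih h2)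

lemma factorial_le_of_pos (n : ℕ) (hn : 0 < n) :
    Nat.factorial (n.primeFactors.card + 1) ≤ n :=
  le_trans (prod_ge_factorial _ (fun p hp => (Nat.prime_of_mem_primeFactors hp).two_le))
    (Nat.le_of_dvd hn (Nat.prod_primeFactors_dvd n))

lemma eventually_jacobsthal {ε : ℝ} (hε : 0 < ε) :
    ∀ᶠ n : ℕ in atTop, ((n.primeFactors.card + 1) * 2^(n.primeFactors.card) : ℝ) < ε * n := by
  obtain ⟨K, hK⟩ := eventually_atTop.mp
    ((FloorSemiring.tendsto_pow_div_factorial_atTop (2:ℝ)).eventually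
      (eventually_lt_nhds hε))
  set v : ℝ := ((K+1) * 2^K : ℝ) with hv
  filter_upwards [eventually_ge_atTop (max 1 (⌈v/ε⌉₊ + 1))] with n hn
  have hn1 : 1 ≤ n := le_trans (le_max_left _ _) hn
  have hnc : ⌈v/ε⌉₊ + 1 ≤ n := le_trans (le_max_right _ _) hn
  set k := n.primeFactors.card with hk
  rcases le_or_gt K k with hKk | hkK
  · have h1 : (2:ℝ)^k / k.factorial < ε := hK k hKk
    have hfac : (0:ℝ) < ((k+1) * k.factorial : ℕ) := by positivity
    have h1' : (2:ℝ)^k < ε * k.factorial := by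
      rw [div_lt_iff₀ (by positivity : (0:ℝ) < (k.factorial:ℝ))] at h1
      exact h1
    have hfacn : ((k+1) * k.factorial : ℕ) ≤ n := by
      rw [← Nat.factorial_succ]
      exact factorial_le_of_pos n hn1
    have hfacnR : (((k+1) * k.factorial : ℕ) : ℝ) ≤ n := by exact_mod_cast hfacn
    have h2 : ((k:ℝ)+1) * 2^k < ε * (((k+1) * k.factorial : ℕ) : ℝ) := by
      push_cast
      nlinarith [mul_lt_mul_of_pos_left h1' (show (0:ℝ) < (k:ℝ)+1 by positivity)]
    calc ((k:ℝ)+1) * 2^k < ε * (((k+1) * k.factorial : ℕ) : ℝ) := h2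
      _ ≤ ε * n := by apply mul_le_mul_of_nonneg_left hfacnR hε.le
  · have h2 : ((k:ℝ)+1) * 2^k ≤ v := by
      rw [hv]
      have : (2:ℝ)^k ≤ 2^K := by
        apply pow_le_pow_right₀ one_le_two hkK.le
      push_cast
      have : ((k:ℝ)+1) ≤ (K:ℝ)+1 := by
        have : (k:ℝ) ≤ K := by exact_mod_cast hkK.le
        linarith
      nlinarith [pow_pos (show (0:ℝ) < 2 by norm_num) k, pow_le_pow_right₀ (show (1:ℝ) ≤ 2 by norm_num) hkK.le]
    have h3 : v < ε * n := by
      rw [← div_lt_iff₀' hε]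
      calc v/ε ≤ (⌈v/ε⌉₊ : ℝ) := Nat.le_ceil _
        _ < n := by exact_mod_cast hnc
    linarith
lemma exists_coprime_in_interval {ε : ℝ} (hε : 0 < ε) :
    ∀ᶠ n : ℕ in atTop, ∀ t : ℝ, 0 ≤ t →
      ∃ a : ℕ, Nat.Coprime n a ∧ t ≤ a ∧ (a:ℝ) < t + ε * n := by
  filter_upwards [eventually_jacobsthal (half_pos hε), eventually_ge_atTop 1,
    eventually_ge_atTop ⌈2/ε⌉₊] with n hJ hn1 hn2
  intro t ht
  set k := n.primeFactors.card with hk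
  set x := ⌈t⌉₊ with hx
  set m := ⌊ε * n / 2⌋₊ + 1 with hm
  have hnR : (1:ℝ) ≤ n := by exact_mod_cast hn1
  have hm1 : ((k:ℝ)+1) * 2^k < m := by
    have h0 := Nat.lt_floor_add_one (ε * n / 2)
    have : ε/2 * n = ε * n / 2 := by ring
    rw [hm]
    push_cast
    calc ((k:ℝ)+1)*2^k < ε/2 * n := by exact_mod_cast hJ
      _ = ε * n / 2 := by ring
      _ ≤ ⌊ε * n / 2⌋₊ + 1 := h0.le
  have h2εn : (2:ℝ) ≤ ε * n := by
    have h1 : (2/ε : ℝ) ≤ ⌈2/ε⌉₊ := Nat.le_ceil _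
    have h2 : ((⌈2/ε⌉₊:ℕ):ℝ) ≤ n := by exact_mod_cast hn2
    rw [div_le_iff₀ hε] at h1
    nlinarith
  have hm2 : (m:ℝ) ≤ ε * n := by
    have h1 : (⌊ε * n / 2⌋₊ : ℝ) ≤ ε * n / 2 := Nat.floor_le (by positivity)
    rw [hm]
    push_cast
    linarith
  have hcnt := coprime_count n x m hn1
  have hprod := prod_one_sub_inv_ge n.primeFactors
    (fun p hp => (Nat.prime_of_mem_primeFactors hp).two_le)
  have hpos : 0 < ((Finset.Ico x (x+m)).filter (fun a => n.Coprime a)).card := by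
    have hk1 : (0:ℝ) < (k:ℝ)+1 := by positivity
    have hA : ((k:ℝ)+1) * 2^k < (m:ℝ) * ((1:ℝ)/((k:ℝ)+1)) * ((k:ℝ)+1) := by
      rw [mul_one_div, div_mul_cancel₀ _ hk1.ne']
      exact hm1
    have hB : (2:ℝ)^k < (m:ℝ) * ((1:ℝ)/((k:ℝ)+1)) := by
      nlinarith [pow_pos (show (0:ℝ) < 2 by norm_num) k]
    have hC : (m:ℝ) * ((1:ℝ)/((k:ℝ)+1)) ≤ (m:ℝ) * ∏ p ∈ n.primeFactors, (1 - 1/(p:ℝ)) := by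
      apply mul_le_mul_of_nonneg_left _ (Nat.cast_nonneg m)
      exact hprod
    have : (0:ℝ) < (((Finset.Ico x (x+m)).filter (fun a => n.Coprime a)).card : ℝ) := by
      have : ((2:ℝ))^k ≤ 2^(n.primeFactors.card) := le_of_eq (by rw [hk])
      linarith
    exact_mod_cast this
  obtain ⟨a, hamem⟩ := Finset.card_pos.mp hpos
  obtain ⟨haIco, hacop⟩ := Finset.mem_filter.mp hamem
  obtain ⟨hax, haxm⟩ := Finset.mem_Ico.mp haIco
  refine ⟨a, hacop, ?_, ?_⟩
  · calc t ≤ (⌈t⌉₊ : ℝ) := Nat.le_ceil t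
      _ ≤ a := by exact_mod_cast hax
  · have h1 : (x:ℝ) < t + 1 := Nat.ceil_lt_add_one ht
    have h2 : (a:ℝ) ≤ (x:ℝ) + (m:ℝ) - 1 := by
      have : a + 1 ≤ x + m := haxm
      have := (by exact_mod_cast this : (a:ℝ) + 1 ≤ (x:ℝ) + m)
      linarith
    linarith

/-- `W(ψ)`: the set of `x ∈ [0,1)` such that `|n·x − a| < ψ(n)` for infinitely many
pairs `(a, n)` with `n > 0` and `gcd(a, n) = 1`. -/
def WSet (ψ : ℕ → ℝ) : Set ℝ :=
  {x | x ∈ Set.Ico (0 : ℝ) 1 ∧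
    {p : ℤ × ℕ | 0 < p.2 ∧ Int.gcd p.1 (p.2 : ℤ) = 1 ∧
      |(p.2 : ℝ) * x - (p.1 : ℝ)| < ψ p.2}.Infinite}

lemma infinite_pairs_iff (ψ : ℕ → ℝ) (x : ℝ) :
    {p : ℤ × ℕ | 0 < p.2 ∧ Int.gcd p.1 (p.2 : ℤ) = 1 ∧
      |(p.2 : ℝ) * x - (p.1 : ℝ)| < ψ p.2}.Infinite
      ↔ ∀ N : ℕ, ∃ n, N ≤ n ∧ 0 < n ∧ ∃ a : ℤ, Int.gcd a (n:ℤ) = 1 ∧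
          |(n:ℝ) * x - (a:ℝ)| < ψ n := by
  set S := {p : ℤ × ℕ | 0 < p.2 ∧ Int.gcd p.1 (p.2 : ℤ) = 1 ∧
      |(p.2 : ℝ) * x - (p.1 : ℝ)| < ψ p.2} with hS
  constructor
  · intro hinf N
    by_contra hno
    push_neg at hno
    apply hinf
    have hfib : ∀ n : ℕ, ({a : ℤ | |(n:ℝ) * x - (a:ℝ)| < ψ n}).Finite := by
      intro n
      apply Set.Finite.subset (Set.finite_Icc ⌈(n:ℝ)*x - ψ n⌉ ⌊(n:ℝ)*x + ψ n⌋)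
      intro a ha
      rw [Set.mem_setOf_eq, abs_sub_lt_iff] at ha
      exact Set.mem_Icc.mpr ⟨Int.ceil_le.mpr (by linarith [ha.1, ha.2]),
        Int.le_floor.mpr (by linarith [ha.1, ha.2])⟩
    apply Set.Finite.subset (Set.Finite.biUnion (Set.finite_Iio N)
      (fun n _ => ((hfib n).image (fun a : ℤ => (a, n)))))
    rintro ⟨a, n⟩ hp
    obtain ⟨hn, hg, hlt⟩ := hp
    have hnN : n < N := by
      by_contra hge
      push_neg at hge
      exact absurd hlt (not_lt.mpr (hno n hge hn a hg))
    exact Set.mem_biUnion hnN ⟨a, hlt, rfl⟩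
  · intro h
    intro hfin
    have himg : (Prod.snd '' S).Finite := hfin.image _
    obtain ⟨B, hB⟩ := himg.bddAbove
    obtain ⟨n, hnB, hn0, a, hg, hlt⟩ := h (B + 1)
    have : n ∈ Prod.snd '' S := ⟨(a, n), ⟨hn0, hg, hlt⟩, rfl⟩
    have := hB this
    omega

lemma abs_sub_round_le_abs (v : ℝ) : |v - round v| ≤ |v| := by
  rcases le_or_gt (1/2 : ℝ) |v| with h | h
  · exact le_trans (abs_sub_round v) h
  · have h0 : round v = 0 := by
      rw [round_eq, Int.floor_eq_zero_iff]
      obtain ⟨h1, h2⟩ := abs_lt.mp h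
      constructor <;> simp <;> linarith
    simp [h0]

lemma mem_approx_iff {x : ℝ} {n : ℕ} (hn : 0 < n) (δ : ℝ) :
    ((x : UnitAddCircle) ∈ approxAddOrderOf UnitAddCircle n δ)
      ↔ ∃ a : ℤ, Int.gcd a (n:ℤ) = 1 ∧ |x - (a:ℝ)/(n:ℝ)| < δ := by
  haveI : Fact ((0:ℝ) < 1) := ⟨zero_lt_one⟩
  rw [approxAddOrderOf, Metric.mem_thickening_iff]
  constructor
  · rintro ⟨y, hy, hxy⟩
    rw [Set.mem_setOf_eq] at hy
    obtain ⟨m, hmn, hg, rfl⟩ := (AddCircle.addOrderOf_eq_pos_iff hn).mp hy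
    set u := x - (m:ℝ)/(n:ℝ) with hu
    have hdist : dist (↑x : UnitAddCircle) ↑((m:ℝ)/(n:ℝ) * 1) = |u - (round u : ℝ)| := by
      rw [dist_eq_norm, mul_one, ← AddCircle.coe_sub, UnitAddCircle.norm_eq]
    refine ⟨(m:ℤ) + (n:ℤ) * round u, ?_, ?_⟩
    · have h1 : IsCoprime (m:ℤ) (n:ℤ) := Int.isCoprime_iff_gcd_eq_one.mpr (by
        rw [Int.gcd_natCast_natCast]; exact hg)
      exact Int.isCoprime_iff_gcd_eq_one.mp (h1.add_mul_left_left (round u))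
    · have hnne : (n:ℝ) ≠ 0 := Nat.cast_ne_zero.mpr hn.ne'
      have : x - ((m:ℤ) + (n:ℤ) * round u : ℤ)/(n:ℝ) = u - round u := by
        push_cast
        field_simp [hu]
        have h' : (n:ℝ) * ((m:ℝ)/n) = m := by field_simp
        rw [hu]; linear_combination h'
      rw [this]
      rw [hdist] at hxy
      exact hxy
  · rintro ⟨a, hg, ha⟩
    refine ⟨↑((a:ℝ)/(n:ℝ) * 1), ?_, ?_⟩
    · exact AddCircle.addOrderOf_div_of_gcd_eq_one' hn hg
    · rw [dist_eq_norm, mul_one, ← AddCircle.coe_sub, UnitAddCircle.norm_eq]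
      exact lt_of_le_of_lt (abs_sub_round_le_abs _) ha

lemma mem_blimsup_nat {α : Type*} (u : ℕ → Set α) (p : ℕ → Prop) (x : α) :
    x ∈ Filter.blimsup u Filter.atTop p ↔ ∀ N, ∃ n, p n ∧ N ≤ n ∧ x ∈ u n := by
  rw [Filter.blimsup_eq_iInf_biSup_of_nat]
  simp only [Set.iInf_eq_iInter, Set.mem_iInter, Set.iSup_eq_iUnion, Set.mem_iUnion]
  constructor
  · intro h N
    obtain ⟨n, ⟨hp, hN⟩, hx⟩ := h N
    exact ⟨n, hp, hN, hx⟩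
  · intro h N
    obtain ⟨n, hp, hN, hx⟩ := h N
    exact ⟨n, ⟨hp, hN⟩, hx⟩

lemma wset_mem_iff (ψ : ℕ → ℝ) (x : ℝ) (hx : x ∈ Set.Ico (0:ℝ) 1) :
    x ∈ WSet ψ ↔
      (↑x : UnitAddCircle) ∈ addWellApproximable UnitAddCircle (fun n => ψ n / n) := by
  rw [WSet, Set.mem_setOf_eq, and_iff_right hx, infinite_pairs_iff,
    addWellApproximable, mem_blimsup_nat]
  constructor
  · intro h N
    obtain ⟨n, hN, hn0, a, hg, hlt⟩ := h N
    refine ⟨n, hn0, hN, (mem_approx_iff hn0 _).mpr ⟨a, hg, ?_⟩⟩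
    have hnpos : (0:ℝ) < n := Nat.cast_pos.mpr hn0
    rw [show x - (a:ℝ)/(n:ℝ) = ((n:ℝ)*x - a)/(n:ℝ) by field_simp, abs_div,
      abs_of_pos hnpos, div_lt_div_iff_of_pos_right hnpos]
    exact hlt
  · intro h N
    obtain ⟨n, hn0, hN, hmem⟩ := h N
    obtain ⟨a, hg, hlt⟩ := (mem_approx_iff hn0 _).mp hmem
    refine ⟨n, hN, hn0, a, hg, ?_⟩
    have hnpos : (0:ℝ) < n := Nat.cast_pos.mpr hn0
    rw [show x - (a:ℝ)/(n:ℝ) = ((n:ℝ)*x - a)/(n:ℝ) by field_simp, abs_div,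
      abs_of_pos hnpos, div_lt_div_iff_of_pos_right hnpos] at hlt
    exact hlt

lemma wset_full (ψ : ℕ → ℝ) (hψ : ∀ n, 0 ≤ ψ n)
    (h : ¬ Tendsto (fun n : ℕ => ψ n / n) atTop (nhds 0)) :
    ∀ x ∈ Set.Ico (0:ℝ) 1, x ∈ WSet ψ := by
  rw [Metric.tendsto_atTop] at h
  push_neg at h
  obtain ⟨ε, hε, hfreq⟩ := h
  intro x hx
  refine ⟨hx, (infinite_pairs_iff ψ x).mpr ?_⟩
  intro N
  obtain ⟨N₀, hN₀⟩ := eventually_atTop.mp (exists_coprime_in_interval hε)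
  obtain ⟨n, hn, hdist⟩ := hfreq (max N (max N₀ 1))
  have hn0 : 0 < n := lt_of_lt_of_le (by positivity) (le_trans (le_max_right N₀ 1) (le_trans (le_max_right N _) hn))
  have hnR : (0:ℝ) < n := Nat.cast_pos.mpr hn0
  have hψn : ε * n ≤ ψ n := by
    rw [Real.dist_eq, sub_zero, abs_of_nonneg (div_nonneg (hψ n) hnR.le)] at hdist
    rw [← le_div_iff₀ hnR]
    exact hdist
  have hx0 : (0:ℝ) ≤ (n:ℝ) * x := mul_nonneg hnR.le hx.1
  obtain ⟨a, hcop, hta, hlt⟩ :=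
    hN₀ n (le_trans (le_max_left N₀ 1) (le_trans (le_max_right N _) hn)) ((n:ℝ)*x) hx0
  refine ⟨n, le_trans (le_max_left _ _) hn, hn0, (a:ℤ), ?_, ?_⟩
  · rw [Int.gcd_natCast_natCast]
    exact (Nat.coprime_comm.mp hcop)
  · push_cast
    rw [abs_sub_comm, abs_of_nonneg (by linarith : (0:ℝ) ≤ (a:ℝ) - (n:ℝ)*x)]
    linarith

/-- Gallagher's zero-one law. -/
theorem gallagher_zero_one_law (ψ : ℕ → ℝ) (hψ : ∀ n, 0 ≤ ψ n) :
    volume (WSet ψ ∩ Set.Ico (0 : ℝ) 1) = 0 ∨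
      volume (WSet ψ ∩ Set.Ico (0 : ℝ) 1) = 1 := by
  haveI : Fact ((0:ℝ) < 1) := ⟨zero_lt_one⟩
  have hWI : WSet ψ ∩ Set.Ico (0:ℝ) 1 = WSet ψ := Set.inter_eq_left.mpr (fun x hx => hx.1)
  by_cases hδ : Tendsto (fun n : ℕ => ψ n / n) atTop (nhds 0)
  · set E := addWellApproximable UnitAddCircle (fun n => ψ n / n) with hE
    have hset : WSet ψ = (((↑) : ℝ → UnitAddCircle) ⁻¹' E) ∩ Set.Ico 0 1 := by
      ext x
      constructor
      · intro hx
        exact ⟨(wset_mem_iff ψ x hx.1).mp hx, hx.1⟩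
      · rintro ⟨hxE, hxI⟩
        exact (wset_mem_iff ψ x hxI).mpr hxE
    have hmp := AddCircle.measurePreserving_mk (T := 1) 0
    rw [zero_add] at hmp
    rcases AddCircle.addWellApproximable_ae_empty_or_univ (T := 1) (fun n => ψ n / n) hδ
      with hae | hae
    · left
      have hnull : volume E = 0 := by
        rw [ae_iff] at hae
        simpa using hae
      have hpre : volume ((((↑) : ℝ → UnitAddCircle) ⁻¹' E) ∩ Set.Ioc 0 1) = 0 := by
        have := hmp.quasiMeasurePreserving.preimage_null hnull
        rwa [Measure.restrict_apply' measurableSet_Ioc] at this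
      rw [hWI, hset]
      refine le_antisymm ?_ bot_le
      calc volume ((((↑) : ℝ → UnitAddCircle) ⁻¹' E) ∩ Set.Ico 0 1)
          ≤ volume (((((↑) : ℝ → UnitAddCircle) ⁻¹' E) ∩ Set.Ioc 0 1) ∪ {(0:ℝ)}) := by
            apply measure_mono
            rintro y ⟨hyE, hy0, hy1⟩
            rcases eq_or_lt_of_le hy0 with rfl | hpos
            · exact Or.inr rfl
            · exact Or.inl ⟨hyE, hpos, hy1.le⟩
        _ ≤ volume ((((↑) : ℝ → UnitAddCircle) ⁻¹' E) ∩ Set.Ioc 0 1) + volume ({(0:ℝ)} : Set ℝ) :=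
            measure_union_le _ _
        _ = 0 := by rw [hpre, Real.volume_singleton, add_zero]
    · right
      have hnull : volume Eᶜ = 0 := by
        rw [ae_iff] at hae
        exact hae
      have hpre : volume ((((↑) : ℝ → UnitAddCircle) ⁻¹' Eᶜ) ∩ Set.Ioc 0 1) = 0 := by
        have := hmp.quasiMeasurePreserving.preimage_null hnull
        rwa [Measure.restrict_apply' measurableSet_Ioc] at this
      have hlow : (1:ℝ≥0∞) ≤ volume ((((↑) : ℝ → UnitAddCircle) ⁻¹' E) ∩ Set.Ioc 0 1) := by
        have hsub : Set.Ioc (0:ℝ) 1 ⊆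
            ((((↑) : ℝ → UnitAddCircle) ⁻¹' E) ∩ Set.Ioc 0 1) ∪
              ((((↑) : ℝ → UnitAddCircle) ⁻¹' Eᶜ) ∩ Set.Ioc 0 1) := by
          intro y hy
          by_cases hyE : (↑y : UnitAddCircle) ∈ E
          · exact Or.inl ⟨hyE, hy⟩
          · exact Or.inr ⟨hyE, hy⟩
        calc (1:ℝ≥0∞) = volume (Set.Ioc (0:ℝ) 1) := by simp [Real.volume_Ioc]
          _ ≤ _ + _ := le_trans (measure_mono hsub) (measure_union_le _ _)
          _ = volume ((((↑) : ℝ → UnitAddCircle) ⁻¹' E) ∩ Set.Ioc 0 1) := by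
              rw [hpre, add_zero]
      have hupp : volume ((((↑) : ℝ → UnitAddCircle) ⁻¹' E) ∩ Set.Ioc 0 1)
          ≤ volume (WSet ψ ∩ Set.Ico 0 1) + volume ({(1:ℝ)} : Set ℝ) := by
        rw [hWI, hset]
        refine le_trans (measure_mono ?_) (measure_union_le _ _)
        rintro y ⟨hyE, hy0, hy1⟩
        rcases eq_or_lt_of_le hy1 with rfl | hlt
        · exact Or.inr rfl
        · exact Or.inl ⟨hyE, hy0.le, hlt⟩
      rw [Real.volume_singleton, add_zero] at hupp
      refine le_antisymm ?_ (le_trans hlow hupp)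
      calc volume (WSet ψ ∩ Set.Ico (0:ℝ) 1) ≤ volume (Set.Ico (0:ℝ) 1) :=
            measure_mono Set.inter_subset_right
        _ = 1 := by simp [Real.volume_Ico]
  · right
    have heq : WSet ψ ∩ Set.Ico (0:ℝ) 1 = Set.Ico (0:ℝ) 1 := by
      apply Set.inter_eq_right.mpr
      intro x hx
      exact wset_full ψ hψ hδ x hx
    rw [heq]
    simp [Real.volume_Ico]
end

section
/- Let f : [0,∞) → ℝ be defined by f(0)=0, f(x) = x·exp(log x / (2·log(−log x))) for 0 < x < 1, and f(x)=1 for x ≥ 1. Then for every ε > 0: (i) f(x)/x^{1+ε} → ∞ as x → 0⁺, and (ii) f(x)·(−log x)^{ε}/x → 0 as x → 0⁺. In other words, as x tends to zero from above, f(x) tends to zero faster than x·(−log x)^{−ε} but more slowly than x^{1+ε}, for every ε > 0. -/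
open Filter Topology

/-- The function `f` from the paper: `f(0)=0`,
`f(x) = x·exp(log x / (2·log(−log x)))` for `0 < x < 1`, and `f(x)=1` for `x ≥ 1`. -/
noncomputable def dsF (x : ℝ) : ℝ :=
  if x ≤ 0 then 0
  else if x < 1 then x * Real.exp (Real.log x / (2 * Real.log (-Real.log x)))
  else 1

private lemma ds_neg_log_tendsto : Tendsto (fun x : ℝ => -Real.log x) (𝓝[>] (0:ℝ)) atTop :=
  tendsto_neg_atBot_atTop.comp Real.tendsto_log_nhdsGT_zero

private lemma ds_aux1 (ε : ℝ) (hε : 0 < ε) :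
    Tendsto (fun t : ℝ => Real.exp (ε * t - t / (2 * Real.log t))) atTop atTop := by
  apply Real.tendsto_exp_atTop.comp
  have h2 : Tendsto (fun t : ℝ => 2 * Real.log t) atTop atTop :=
    Real.tendsto_log_atTop.const_mul_atTop two_pos
  have hinv : Tendsto (fun t : ℝ => (2 * Real.log t)⁻¹) atTop (𝓝 0) :=
    h2.inv_tendsto_atTop
  have h0 : Tendsto (fun t : ℝ => ε - (2 * Real.log t)⁻¹) atTop (𝓝 ε) := by
    simpa using tendsto_const_nhds.sub hinv
  have := Tendsto.atTop_mul_pos hε (tendsto_id (α := ℝ)) h0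
  refine this.congr fun t => ?_
  simp only [id]
  field_simp

private lemma ds_aux2 (ε : ℝ) (hε : 0 < ε) :
    Tendsto (fun t : ℝ => Real.exp (-(t / (2 * Real.log t)) + ε * Real.log t)) atTop (𝓝 0) := by
  apply Real.tendsto_exp_atBot.comp
  have key : Tendsto (fun t : ℝ => t / (2 * Real.log t) - ε * Real.log t) atTop atTop := by
    have hsq : Tendsto (fun t : ℝ => Real.log t ^ 2 / t) atTop (𝓝 0) := by
      simpa using Real.tendsto_pow_log_div_mul_add_atTop 1 0 2 one_ne_zero
    have hsq' : Tendsto (fun t : ℝ => Real.log t ^ 2 / t) atTop (𝓝[>] 0) := by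
      apply tendsto_nhdsWithin_of_tendsto_nhds_of_eventually_within _ hsq
      filter_upwards [eventually_gt_atTop (1:ℝ)] with t ht
      exact div_pos (pow_pos (Real.log_pos ht) 2) (by linarith)
    have hinv : Tendsto (fun t : ℝ => t / Real.log t ^ 2) atTop atTop := by
      have := hsq'.inv_tendsto_nhdsGT_zero
      refine this.congr fun t => ?_
      simp [inv_div]
    have hmain : Tendsto (fun t : ℝ =>
        Real.log t * (t / Real.log t ^ 2 / 2 + (-ε))) atTop atTop :=
      Real.tendsto_log_atTop.atTop_mul_atTop₀
        (tendsto_atTop_add_const_right _ (-ε) (hinv.atTop_div_const two_pos))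
    refine hmain.congr' ?_
    filter_upwards [eventually_gt_atTop (1:ℝ)] with t ht
    have hl : Real.log t ≠ 0 := ne_of_gt (Real.log_pos ht)
    field_simp
    ring
  have := tendsto_neg_atTop_atBot.comp key
  refine this.congr fun t => ?_
  simp only [Function.comp]
  ring

/-- As `x → 0⁺`, `f(x)` tends to zero more slowly than `x^{1+ε}` and faster than
`x·(−log x)^{−ε}`, for every `ε > 0`. -/
theorem dsF_asymptotics :
    ∀ ε : ℝ, 0 < ε →
      Tendsto (fun x : ℝ => dsF x / x ^ ((1 : ℝ) + ε)) (𝓝[>] (0 : ℝ)) atTop ∧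
      Tendsto (fun x : ℝ => dsF x * (-Real.log x) ^ ε / x) (𝓝[>] (0 : ℝ)) (𝓝 0) := by
  intro ε hε
  have hmem : Set.Ioo (0:ℝ) 1 ∈ 𝓝[>] (0:ℝ) := Ioo_mem_nhdsGT_of_mem (by simp)
  constructor
  · have h := (ds_aux1 ε hε).comp ds_neg_log_tendsto
    refine h.congr' ?_
    filter_upwards [hmem] with x hx
    have hx0 : (0:ℝ) < x := hx.1
    simp only [Function.comp, dsF, if_neg (not_le.2 hx0), if_pos hx.2]
    rw [Real.rpow_add hx0, Real.rpow_one, Real.rpow_def_of_pos hx0,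
      mul_div_mul_left _ _ (ne_of_gt hx0), ← Real.exp_sub, Real.exp_eq_exp]
    ring
  · have h := (ds_aux2 ε hε).comp ds_neg_log_tendsto
    refine Tendsto.congr' ?_ h
    filter_upwards [hmem] with x hx
    have hx0 : (0:ℝ) < x := hx.1
    have ht : (0:ℝ) < -Real.log x := by
      have := Real.log_neg hx0 hx.2; linarith
    simp only [Function.comp, dsF, if_neg (not_le.2 hx0), if_pos hx.2]
    have hcancel : ∀ a b : ℝ, x * a * b / x = a * b := fun a b => by
      field_simp
    rw [Real.rpow_def_of_pos ht, hcancel, ← Real.exp_add, Real.exp_eq_exp]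
    ring
end
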